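/- Let L be symmetric PSD, N symmetric PSD with (1/2) N⁺ ⪯ L ⪯ 2 N⁺ and Range(N) = Range(L), and let S_z = (1/2) N^{1/2} Σ_{k=0}^{z} (I - (1/2) N^{1/2} L N^{1/2})^k N^{1/2} for an integer z ≥ 4 log(16/√ε) (natural log, ε ∈ (0,1)). Then (1 - √ε/4) L⁺ ⪯ S_z ⪯ L⁺. -/

import Mathlib

open Matrix Finset

/-- `Ap` is the Moore–Penrose pseudoinverse of `A` (the four Penrose conditions). -/
def IsMoorePenroseInv {n : ℕ} (A Ap : Matrix (Fin n) (Fin n) ℝ) : Prop :=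
  A * Ap * A = A ∧ Ap * A * Ap = Ap ∧ (A * Ap)ᵀ = A * Ap ∧ (Ap * A)ᵀ = Ap * A

/-- Loewner order on real symmetric matrices: domination of quadratic forms. -/
def LoewnerLE {n : ℕ} (M N : Matrix (Fin n) (Fin n) ℝ) : Prop :=
  ∀ z : Fin n → ℝ, z ⬝ᵥ M.mulVec z ≤ z ⬝ᵥ N.mulVec z

section Aux
variable {n : ℕ}

private lemma star_eq_t (A : Matrix (Fin n) (Fin n) ℝ) : star A = Aᵀ :=
  (Matrix.star_eq_conjTranspose A).trans (Matrix.conjTranspose_eq_transpose_of_trivial A)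

private lemma herm_t {A : Matrix (Fin n) (Fin n) ℝ} (h : A.IsHermitian) : Aᵀ = A :=
  (Matrix.conjTranspose_eq_transpose_of_trivial A).symm.trans h

private lemma mulVec_ext {A B : Matrix (Fin n) (Fin n) ℝ}
    (h : ∀ x, A *ᵥ x = B *ᵥ x) : A = B := by
  ext i j
  have := congrFun (h (Pi.single j 1)) i
  simpa using this

private lemma mp_unique {A B C : Matrix (Fin n) (Fin n) ℝ}
    (hB : IsMoorePenroseInv A B) (hC : IsMoorePenroseInv A C) : B = C := by
  obtain ⟨hB1, hB2, hB3, hB4⟩ := hB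
  obtain ⟨hC1, hC2, hC3, hC4⟩ := hC
  have hAB : A * B = A * C := by
    calc A * B = (A * C * A) * B := by rw [hC1]
    _ = (A * C) * (A * B) := by simp only [Matrix.mul_assoc]
    _ = (A * C)ᵀ * (A * B)ᵀ := by rw [hC3, hB3]
    _ = Cᵀ * ((A * B * A)ᵀ) := by
        simp only [Matrix.transpose_mul, Matrix.mul_assoc]
    _ = Cᵀ * Aᵀ := by rw [hB1]
    _ = (A * C)ᵀ := by rw [Matrix.transpose_mul]
    _ = A * C := hC3
  have hBA : B * A = C * A := by
    calc B * A = B * (A * C * A) := by rw [hC1]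
    _ = (B * A) * (C * A) := by simp only [Matrix.mul_assoc]
    _ = (B * A)ᵀ * (C * A)ᵀ := by rw [hC4, hB4]
    _ = ((A * B * A)ᵀ) * Cᵀ := by
        simp only [Matrix.transpose_mul, Matrix.mul_assoc]
    _ = Aᵀ * Cᵀ := by rw [hB1]
    _ = (C * A)ᵀ := by rw [Matrix.transpose_mul]
    _ = C * A := hC4
  calc B = B * A * B := hB2.symm
  _ = C * A * B := by rw [hBA]
  _ = C * (A * B) := by rw [Matrix.mul_assoc]
  _ = C * (A * C) := by rw [hAB]
  _ = C * A * C := by rw [Matrix.mul_assoc]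
  _ = C := hC2

private lemma mp_symm {A B : Matrix (Fin n) (Fin n) ℝ} (hA : Aᵀ = A)
    (h : IsMoorePenroseInv A B) : Bᵀ = B := by
  obtain ⟨h1, h2, h3, h4⟩ := h
  have hBt : IsMoorePenroseInv A Bᵀ := by
    refine ⟨?_, ?_, ?_, ?_⟩
    · calc A * Bᵀ * A = (Aᵀ * B * Aᵀ)ᵀ := by
            simp only [Matrix.transpose_mul, Matrix.transpose_transpose, Matrix.mul_assoc]
      _ = (A * B * A)ᵀ := by rw [hA]
      _ = Aᵀ := by rw [h1]
      _ = A := hA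
    · calc Bᵀ * A * Bᵀ = (B * Aᵀ * B)ᵀ := by
            simp only [Matrix.transpose_mul, Matrix.transpose_transpose, Matrix.mul_assoc]
      _ = (B * A * B)ᵀ := by rw [hA]
      _ = Bᵀ := by rw [h2]
    · have e3 : A * Bᵀ = B * A := by
        calc A * Bᵀ = (B * Aᵀ)ᵀ := by simp [Matrix.transpose_mul]
        _ = (B * A)ᵀ := by rw [hA]
        _ = B * A := h4
      rw [e3]; exact h4
    · have e4 : Bᵀ * A = A * B := by
        calc Bᵀ * A = (Aᵀ * B)ᵀ := by simp [Matrix.transpose_mul]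
        _ = (A * B)ᵀ := by rw [hA]
        _ = A * B := h3
      rw [e4]; exact h3
  exact mp_unique hBt ⟨h1, h2, h3, h4⟩

private lemma dot_conj (A B : Matrix (Fin n) (Fin n) ℝ) (x : Fin n → ℝ) :
    x ⬝ᵥ (Aᵀ * B * A) *ᵥ x = (A *ᵥ x) ⬝ᵥ B *ᵥ (A *ᵥ x) := by
  rw [← Matrix.mulVec_mulVec, ← Matrix.mulVec_mulVec, dotProduct_mulVec,
    Matrix.vecMul_transpose]


private lemma geom_bounds {a d : ℝ} {m : ℕ} (ha1 : 1/4 ≤ a) (ha2 : a ≤ 1)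
    (hd : 0 ≤ d) (hpow : (1 - a)^m ≤ d) :
    (1 - d) * a⁻¹ ≤ ∑ k ∈ range m, (1-a)^k ∧ (∑ k ∈ range m, (1-a)^k) ≤ a⁻¹ := by
  have ha0 : (0:ℝ) < a := by linarith
  have hne : (1:ℝ) - a ≠ 1 := by intro h; linarith
  rw [geom_sum_eq hne]
  have key : ((1-a)^m - 1)/((1-a)-1) = (1 - (1-a)^m) * a⁻¹ := by
    rw [show (1 - a) - 1 = -a by ring, div_eq_mul_inv, inv_neg]
    ring
  rw [key]
  have h0 : (0:ℝ) ≤ (1-a)^m := pow_nonneg (by linarith) m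
  have hinv : (0:ℝ) ≤ a⁻¹ := by positivity
  constructor
  · exact mul_le_mul_of_nonneg_right (by linarith) hinv
  · have : (1 - (1-a)^m) * a⁻¹ ≤ 1 * a⁻¹ := mul_le_mul_of_nonneg_right (by linarith) hinv
    simpa using this

private lemma pow34 {e : ℝ} (he0 : 0 < e) (he1 : e < 1) {z : ℕ}
    (hz : 4 * Real.log (16 / Real.sqrt e) ≤ (z : ℝ)) :
    ((3:ℝ)/4) ^ z ≤ Real.sqrt e / 16 := by
  set s := Real.sqrt e with hs
  have hs0 : 0 < s := Real.sqrt_pos.mpr he0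
  have hs1 : s < 1 := by
    rw [hs, show (1:ℝ) = Real.sqrt 1 by simp]
    exact Real.sqrt_lt_sqrt (le_of_lt he0) he1
  have hlog34 : Real.log (3/4) ≤ -(1/4 : ℝ) := by
    have := Real.log_le_sub_one_of_pos (show (0:ℝ) < 3/4 by norm_num)
    linarith
  have hL : 0 < Real.log (16 / s) := Real.log_pos (by rw [lt_div_iff₀ hs0]; linarith)
  have h2 : Real.log (((3:ℝ)/4)^z) ≤ Real.log (s/16) := by
    rw [Real.log_pow]
    have hneg : Real.log (s/16) = - Real.log (16/s) := by
      rw [← Real.log_inv]; congr 1; field_simp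
    rw [hneg]
    calc (z:ℝ) * Real.log (3/4) ≤ (z:ℝ) * (-(1/4)) :=
          mul_le_mul_of_nonneg_left hlog34 (by positivity)
    _ ≤ - Real.log (16/s) := by linarith
  have h3 := Real.exp_le_exp.mpr h2
  rw [Real.exp_log (by positivity), Real.exp_log (by positivity)] at h3
  linarith

end Aux

theorem stmt_17 {n : ℕ} (L N Np Lp R : Matrix (Fin n) (Fin n) ℝ)
    (hL : L.PosSemidef) (hN : N.PosSemidef)
    (hNp : IsMoorePenroseInv N Np) (hLp : IsMoorePenroseInv L Lp)
    (hlow : LoewnerLE ((1 / 2 : ℝ) • Np) L) (hhigh : LoewnerLE L ((2 : ℝ) • Np))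
    (hrange : Set.range N.mulVec = Set.range L.mulVec)
    (hR : R.PosSemidef) (hRsq : R * R = N)   -- R = N^{1/2}
    (ε : ℝ) (hε0 : 0 < ε) (hε1 : ε < 1)
    (z : ℕ) (hz : 4 * Real.log (16 / Real.sqrt ε) ≤ (z : ℝ))
    (Sz : Matrix (Fin n) (Fin n) ℝ)
    (hSz : Sz = (1 / 2 : ℝ) •
      (R * (∑ k ∈ range (z + 1), (1 - (1 / 2 : ℝ) • (R * L * R)) ^ k) * R)) :
    LoewnerLE ((1 - Real.sqrt ε / 4) • Lp) Sz ∧ LoewnerLE Sz Lp := by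
  classical
  have hLs : Lᵀ = L := herm_t hL.1
  have hNs : Nᵀ = N := herm_t hN.1
  have hRs : Rᵀ = R := herm_t hR.1
  have hNps : Npᵀ = Np := mp_symm hNs hNp
  have hLps : Lpᵀ = Lp := mp_symm hLs hLp
  set P : Matrix (Fin n) (Fin n) ℝ := N * Np with hPdef
  have hPs : Pᵀ = P := hNp.2.2.1
  have hPN : P * N = N := hNp.1
  have hNP : N * P = N := by
    have h := congrArg Matrix.transpose hPN
    simpa [Matrix.transpose_mul, hPs, hNs] using h
  have hPP : P * P = P := by
    calc P * P = (N * Np * N) * Np := by simp only [hPdef, Matrix.mul_assoc]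
    _ = N * Np := by rw [hNp.1]
  have hNpN : Np * N = P := by
    calc Np * N = (Np * N)ᵀ := hNp.2.2.2.symm
    _ = Nᵀ * Npᵀ := Matrix.transpose_mul _ _
    _ = P := by rw [hNs, hNps]
  have hRP : R * P = R := by
    have hcc : Rᴴ * R = N := by
      rw [Matrix.conjTranspose_eq_transpose_of_trivial, hRs, hRsq]
    have hN0 : N * (1 - P) = 0 := by rw [Matrix.mul_sub, Matrix.mul_one, hNP, sub_self]
    have hR0 : R * (1 - P) = 0 := by
      refine (Matrix.conjTranspose_mul_self_mul_eq_zero R (1 - P)).mp ?_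
      rw [hcc]; exact hN0
    rw [Matrix.mul_sub, Matrix.mul_one, sub_eq_zero] at hR0
    exact hR0.symm
  have hPR : P * R = R := by
    have h := congrArg Matrix.transpose hRP
    simpa [Matrix.transpose_mul, hPs, hRs] using h
  have hPL : P * L = L := by
    apply mulVec_ext
    intro x
    have hmem : L *ᵥ x ∈ Set.range N.mulVec := by rw [hrange]; exact ⟨x, rfl⟩
    obtain ⟨y, hy⟩ := hmem
    calc (P * L) *ᵥ x = P *ᵥ (L *ᵥ x) := (Matrix.mulVec_mulVec _ _ _).symm
    _ = P *ᵥ (N *ᵥ y) := by rw [← hy]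
    _ = (P * N) *ᵥ y := Matrix.mulVec_mulVec _ _ _
    _ = N *ᵥ y := by rw [hPN]
    _ = L *ᵥ x := hy
  have hRNpR : R * Np * R = P := by
    have hER : (R * Np * R) * R = R := by
      calc (R * Np * R) * R = R * (Np * (R * R)) := by simp only [Matrix.mul_assoc]
      _ = R * (Np * N) := by rw [hRsq]
      _ = R * P := by rw [hNpN]
      _ = R := hRP
    have hEN : (R * Np * R) * N = N := by
      rw [← hRsq, ← Matrix.mul_assoc, hER]
    have hEP : (R * Np * R) * P = P := by
      rw [hPdef, ← Matrix.mul_assoc, hEN]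
    have hPE : P * (R * Np * R) = R * Np * R := by
      simp only [← Matrix.mul_assoc, hPR]
    have hEs : (R * Np * R)ᵀ = R * Np * R := by
      simp [Matrix.transpose_mul, hRs, hNps, Matrix.mul_assoc]
    have hEP' : (R * Np * R) * P = R * Np * R := by
      have h := congrArg Matrix.transpose hPE
      simpa [Matrix.transpose_mul, hPs, hRs, hNps, Matrix.mul_assoc] using h
    exact hEP'.symm.trans hEP
  set M : Matrix (Fin n) (Fin n) ℝ := (1 / 2 : ℝ) • (R * L * R) with hMdef
  have hMs : Mᵀ = M := by
    rw [hMdef, Matrix.transpose_smul]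
    congr 1
    simp [Matrix.transpose_mul, hRs, hLs, Matrix.mul_assoc]
  have hPM : P * M = M := by
    rw [hMdef, Matrix.mul_smul]
    congr 1
    simp only [← Matrix.mul_assoc, hPR]
  have qf : ∀ (B : Matrix (Fin n) (Fin n) ℝ) (v : Fin n → ℝ),
      v ⬝ᵥ (R * B * R) *ᵥ v = (R *ᵥ v) ⬝ᵥ B *ᵥ (R *ᵥ v) := by
    intro B v
    have h := dot_conj R B v
    rwa [hRs] at h
  have hPsd : ∀ v : Fin n → ℝ, 0 ≤ v ⬝ᵥ P *ᵥ v ∧ (v ⬝ᵥ P *ᵥ v = 0 → P *ᵥ v = 0) := by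
    intro v
    have h1 : v ⬝ᵥ P *ᵥ v = (P *ᵥ v) ⬝ᵥ (P *ᵥ v) := by
      calc v ⬝ᵥ P *ᵥ v = v ⬝ᵥ (Pᵀ * P) *ᵥ v := by rw [hPs, hPP]
      _ = v ⬝ᵥ Pᵀ *ᵥ (P *ᵥ v) := by rw [← Matrix.mulVec_mulVec]
      _ = (P *ᵥ v) ⬝ᵥ (P *ᵥ v) := by rw [dotProduct_mulVec, Matrix.vecMul_transpose]
    refine ⟨?_, ?_⟩
    · rw [h1]; exact Finset.sum_nonneg fun i _ => mul_self_nonneg _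
    · intro h0; rw [h1] at h0; exact dotProduct_self_eq_zero.mp h0
  have hsmudot : ∀ (c : ℝ) (B : Matrix (Fin n) (Fin n) ℝ) (v : Fin n → ℝ),
      v ⬝ᵥ (c • B) *ᵥ v = c * (v ⬝ᵥ B *ᵥ v) := by
    intro c B v
    rw [Matrix.smul_mulVec, dotProduct_smul, smul_eq_mul]
  have hMleP : ∀ v : Fin n → ℝ, v ⬝ᵥ M *ᵥ v ≤ v ⬝ᵥ P *ᵥ v := by
    intro v
    have h2 := hhigh (R *ᵥ v)
    have hsm : v ⬝ᵥ M *ᵥ v = (1 / 2) * ((R *ᵥ v) ⬝ᵥ L *ᵥ (R *ᵥ v)) := by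
      rw [hMdef, hsmudot, qf]
    have hP2 : (R *ᵥ v) ⬝ᵥ Np *ᵥ (R *ᵥ v) = v ⬝ᵥ P *ᵥ v := by rw [← qf, hRNpR]
    have h3 : (R *ᵥ v) ⬝ᵥ ((2 : ℝ) • Np) *ᵥ (R *ᵥ v)
        = 2 * ((R *ᵥ v) ⬝ᵥ Np *ᵥ (R *ᵥ v)) := hsmudot 2 Np (R *ᵥ v)
    rw [h3, hP2] at h2
    rw [hsm]
    linarith
  have hPle4M : ∀ v : Fin n → ℝ, v ⬝ᵥ P *ᵥ v ≤ 4 * (v ⬝ᵥ M *ᵥ v) := by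
    intro v
    have h2 := hlow (R *ᵥ v)
    have hsm : v ⬝ᵥ M *ᵥ v = (1 / 2) * ((R *ᵥ v) ⬝ᵥ L *ᵥ (R *ᵥ v)) := by
      rw [hMdef, hsmudot, qf]
    have hP2 : (R *ᵥ v) ⬝ᵥ Np *ᵥ (R *ᵥ v) = v ⬝ᵥ P *ᵥ v := by rw [← qf, hRNpR]
    have h3 : (R *ᵥ v) ⬝ᵥ ((1 / 2 : ℝ) • Np) *ᵥ (R *ᵥ v)
        = (1 / 2) * ((R *ᵥ v) ⬝ᵥ Np *ᵥ (R *ᵥ v)) := hsmudot _ Np (R *ᵥ v)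
    rw [h3, hP2] at h2
    rw [hsm]
    linarith
  have hMh : M.IsHermitian := by
    show Mᴴ = M
    rw [Matrix.conjTranspose_eq_transpose_of_trivial]
    exact hMs
  set U : Matrix (Fin n) (Fin n) ℝ :=
    (Matrix.IsHermitian.eigenvectorUnitary hMh : Matrix (Fin n) (Fin n) ℝ) with hUdef
  set dg : Fin n → ℝ := hMh.eigenvalues with hdgdef
  have hUsU : star U * U = 1 :=
    (Matrix.mem_unitaryGroup_iff').mp (Matrix.IsHermitian.eigenvectorUnitary hMh).2
  have hUUs : U * star U = 1 :=
    (Matrix.mem_unitaryGroup_iff).mp (Matrix.IsHermitian.eigenvectorUnitary hMh).2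
  have hspec : M = U * Matrix.diagonal dg * star U := by
    have h := hMh.spectral_theorem
    simpa using h
  have hdiag : star U * M * U = Matrix.diagonal dg := by
    rw [hspec]
    calc star U * (U * diagonal dg * star U) * U
        = (star U * U) * diagonal dg * (star U * U) := by simp only [Matrix.mul_assoc]
    _ = diagonal dg := by rw [hUsU, Matrix.one_mul, Matrix.mul_one]
  have cmul : ∀ f g : Fin n → ℝ,
      (U * diagonal f * star U) * (U * diagonal g * star U)
        = U * diagonal (fun i => f i * g i) * star U := by
    intro f g
    calc (U * diagonal f * star U) * (U * diagonal g * star U)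
        = U * diagonal f * ((star U * U) * (diagonal g * star U)) := by
          simp only [Matrix.mul_assoc]
    _ = U * (diagonal f * diagonal g) * star U := by
          rw [hUsU, Matrix.one_mul]; simp only [Matrix.mul_assoc]
    _ = U * diagonal (fun i => f i * g i) * star U := by
          rw [Matrix.diagonal_mul_diagonal]
  have cpow : ∀ (f : Fin n → ℝ) (k : ℕ),
      (U * diagonal f * star U) ^ k = U * diagonal (fun i => f i ^ k) * star U := by
    intro f k
    induction k with
    | zero =>
      simp only [pow_zero]
      rw [show Matrix.diagonal (fun _ : Fin n => (1:ℝ)) = 1 from Matrix.diagonal_one,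
        Matrix.mul_one, hUUs]
    | succ k ih =>
      rw [pow_succ, ih, cmul]
      have he : (fun i => f i ^ k * f i) = fun i => f i ^ (k + 1) :=
        funext fun i => (pow_succ _ _).symm
      rw [he]
  have csum : ∀ (g : ℕ → Fin n → ℝ) (m : ℕ),
      (∑ k ∈ range m, U * diagonal (g k) * star U)
        = U * diagonal (fun i => ∑ k ∈ range m, g k i) * star U := by
    intro g m
    have hd : (∑ k ∈ range m, Matrix.diagonal (g k))
        = Matrix.diagonal (fun i => ∑ k ∈ range m, g k i) := by
      ext i j
      by_cases h : i = j <;> simp [Matrix.sum_apply, Matrix.diagonal_apply, h]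
    calc (∑ k ∈ range m, U * diagonal (g k) * star U)
        = (∑ k ∈ range m, U * diagonal (g k)) * star U := by rw [Finset.sum_mul]
    _ = (U * ∑ k ∈ range m, diagonal (g k)) * star U := by rw [Finset.mul_sum]
    _ = U * diagonal (fun i => ∑ k ∈ range m, g k i) * star U := by rw [hd]
  have dotd : ∀ (g : Fin n → ℝ) (u : Fin n → ℝ),
      u ⬝ᵥ (U * diagonal g * star U) *ᵥ u
        = ∑ i, g i * ((star U *ᵥ u) i) ^ 2 := by
    intro g u
    have hA : (star U)ᵀ = U := by rw [star_eq_t]; simp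
    have h := dot_conj (star U) (diagonal g) u
    rw [hA] at h
    rw [h]
    simp only [dotProduct, Matrix.mulVec_diagonal]
    exact Finset.sum_congr rfl fun i _ => by ring
  set dind : Fin n → ℝ := fun i => if dg i = 0 then 0 else 1 with hinddef
  set Mp : Matrix (Fin n) (Fin n) ℝ := U * diagonal (fun i => (dg i)⁻¹) * star U with hMpdef
  have hMMp : M * Mp = U * diagonal dind * star U := by
    rw [hspec, hMpdef, cmul]
    have he : (fun i => dg i * (dg i)⁻¹) = dind := by
      funext i
      rw [hinddef]
      by_cases h : dg i = 0
      · simp [h]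
      · simp [h, mul_inv_cancel₀ h]
    rw [he]
  have hP'P : U * diagonal dind * star U = P := by
    have hMP' : M * (U * diagonal dind * star U) = M := by
      conv_lhs => rw [hspec]
      rw [cmul]
      have he : (fun i => dg i * dind i) = dg := by
        funext i
        rw [hinddef]
        by_cases h : dg i = 0 <;> simp [h]
      rw [he, ← hspec]
    have hzero : P * (1 - (U * diagonal dind * star U)) = 0 := by
      apply mulVec_ext
      intro x
      have hMy : M *ᵥ ((1 - (U * diagonal dind * star U)) *ᵥ x) = 0 := by
        rw [Matrix.mulVec_mulVec]
        have h0 : M * (1 - (U * diagonal dind * star U)) = 0 := by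
          rw [Matrix.mul_sub, Matrix.mul_one, hMP', sub_self]
        rw [h0, Matrix.zero_mulVec]
      set y := (1 - (U * diagonal dind * star U)) *ᵥ x with hydef
      have h1 : y ⬝ᵥ M *ᵥ y = 0 := by rw [hMy, dotProduct_zero]
      have h2 := hPle4M y
      have h3 := (hPsd y).1
      have h4 : y ⬝ᵥ P *ᵥ y = 0 := le_antisymm (by linarith) h3
      have h5 := (hPsd y).2 h4
      rw [← Matrix.mulVec_mulVec, h5, Matrix.zero_mulVec]
    have hPP' : P * (U * diagonal dind * star U) = P := by
      rw [Matrix.mul_sub, Matrix.mul_one, sub_eq_zero] at hzero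
      exact hzero.symm
    have hP'80 : U * diagonal dind * star U = P * (U * diagonal dind * star U) := by
      calc U * diagonal dind * star U = M * Mp := hMMp.symm
      _ = (P * M) * Mp := by rw [hPM]
      _ = P * (M * Mp) := Matrix.mul_assoc _ _ _
      _ = P * (U * diagonal dind * star U) := by rw [hMMp]
    exact hP'80.trans hPP'
  have hPMp : P * Mp = Mp := by
    rw [← hP'P, hMpdef, cmul]
    have he : (fun i => dind i * (dg i)⁻¹) = fun i => (dg i)⁻¹ := by
      funext i
      rw [hinddef]
      by_cases h : dg i = 0 <;> simp [h]
    rw [he]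
  have hMps : Mpᵀ = Mp := by
    rw [hMpdef, star_eq_t]
    simp [Matrix.transpose_mul, Matrix.transpose_transpose, Matrix.diagonal_transpose,
      Matrix.mul_assoc]
  set X : Matrix (Fin n) (Fin n) ℝ := (1 / 2 : ℝ) • (R * Mp * R) with hXdef
  have hLX : L * X = P := by
    have key : R * (L * X) = (M * Mp) * R := by
      rw [hXdef, hMdef]
      rw [Matrix.mul_smul, Matrix.mul_smul, Matrix.smul_mul, Matrix.smul_mul]
      congr 1
      simp only [Matrix.mul_assoc]
    have hRLX : R * (L * X) = R := by
      rw [key, hMMp, hP'P, hPR]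
    have h0 : R * (L * X - P) = 0 := by rw [Matrix.mul_sub, hRLX, hRP, sub_self]
    have h2 : L * X - P = Np * (R * (R * (L * X - P))) := by
      calc L * X - P = P * (L * X - P) := by
            rw [Matrix.mul_sub, ← Matrix.mul_assoc, hPL, hPP]
      _ = (Np * N) * (L * X - P) := by rw [hNpN]
      _ = (Np * (R * R)) * (L * X - P) := by rw [hRsq]
      _ = Np * (R * (R * (L * X - P))) := by simp only [Matrix.mul_assoc]
    rw [h0, Matrix.mul_zero, Matrix.mul_zero, sub_eq_zero] at h2
    exact h2
  have hXs : Xᵀ = X := by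
    rw [hXdef, Matrix.transpose_smul]
    congr 1
    simp [Matrix.transpose_mul, hRs, hMps, Matrix.mul_assoc]
  have hXL : X * L = P := by
    have h := congrArg Matrix.transpose hLX
    rw [Matrix.transpose_mul, hXs, hLs, hPs] at h
    exact h
  have hXmp : IsMoorePenroseInv L X := by
    refine ⟨?_, ?_, ?_, ?_⟩
    · rw [hLX, hPL]
    · rw [hXL, hXdef, Matrix.mul_smul]
      congr 1
      simp only [← Matrix.mul_assoc, hPR]
    · rw [hLX, hPs]
    · rw [hXL, hPs]
  have hLpX : Lp = X := mp_unique hLp hXmp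
  have hTspec : (∑ k ∈ range (z + 1), (1 - M) ^ k)
      = U * diagonal (fun i => ∑ k ∈ range (z + 1), (1 - dg i) ^ k) * star U := by
    have h1M : 1 - M = U * diagonal (fun i => 1 - dg i) * star U := by
      have hd : Matrix.diagonal (fun i : Fin n => 1 - dg i) = 1 - diagonal dg := by
        rw [← Matrix.diagonal_one, Matrix.diagonal_sub]
      rw [hd, Matrix.mul_sub, Matrix.sub_mul, Matrix.mul_one, hUUs, ← hspec]
    calc (∑ k ∈ range (z + 1), (1 - M) ^ k)
        = ∑ k ∈ range (z + 1), U * diagonal (fun i => (1 - dg i) ^ k) * star U := by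
          refine Finset.sum_congr rfl fun k _ => ?_
          rw [h1M, cpow]
    _ = U * diagonal (fun i => ∑ k ∈ range (z + 1), (1 - dg i) ^ k) * star U :=
          csum (fun k i => (1 - dg i) ^ k) (z + 1)
  have hdbound : ∀ i, dg i = 0 ∨ (1 / 4 ≤ dg i ∧ dg i ≤ 1) := by
    intro i
    by_cases h : dg i = 0
    · exact Or.inl h
    right
    have hconj : ∀ B : Matrix (Fin n) (Fin n) ℝ,
        (U *ᵥ Pi.single i 1) ⬝ᵥ B *ᵥ (U *ᵥ Pi.single i 1)
          = (Pi.single i 1 : Fin n → ℝ) ⬝ᵥ (star U * B * U) *ᵥ (Pi.single i 1) := by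
      intro B
      have hh := dot_conj U B (Pi.single i 1)
      rw [← star_eq_t] at hh
      exact hh.symm
    have hMe : (U *ᵥ Pi.single i 1) ⬝ᵥ M *ᵥ (U *ᵥ Pi.single i 1) = dg i := by
      rw [hconj, hdiag]
      simp [Matrix.mulVec_diagonal, dotProduct, Pi.single_apply]
    have hPe : (U *ᵥ Pi.single i 1) ⬝ᵥ P *ᵥ (U *ᵥ Pi.single i 1) = 1 := by
      rw [hconj, ← hP'P]
      have hc : star U * (U * diagonal dind * star U) * U = diagonal dind := by
        calc star U * (U * diagonal dind * star U) * U
            = (star U * U) * (diagonal dind * (star U * U)) := by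
              simp only [Matrix.mul_assoc]
        _ = diagonal dind := by rw [hUsU, Matrix.mul_one, Matrix.one_mul]
      rw [hc]
      simp [Matrix.mulVec_diagonal, dotProduct, Pi.single_apply, hinddef, h]
    have b1 := hMleP (U *ᵥ Pi.single i 1)
    have b2 := hPle4M (U *ᵥ Pi.single i 1)
    rw [hMe, hPe] at b1 b2
    constructor <;> linarith
  have hpow34 := pow34 hε0 hε1 hz
  have hd0 : (0:ℝ) ≤ Real.sqrt ε / 4 := by positivity
  have hgb : ∀ i, dg i ≠ 0 →
      ((1 - Real.sqrt ε / 4) * (dg i)⁻¹ ≤ ∑ k ∈ range (z + 1), (1 - dg i) ^ k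
        ∧ (∑ k ∈ range (z + 1), (1 - dg i) ^ k) ≤ (dg i)⁻¹) := by
    intro i hi
    rcases hdbound i with h | h
    · exact absurd h hi
    refine geom_bounds h.1 h.2 hd0 ?_
    calc (1 - dg i) ^ (z + 1) ≤ ((3:ℝ)/4) ^ (z + 1) :=
          pow_le_pow_left₀ (by linarith [h.2]) (by linarith [h.1]) _
    _ ≤ ((3:ℝ)/4) ^ z := by
          rw [pow_succ]
          have h34 := pow_nonneg (by norm_num : (0:ℝ) ≤ 3/4) z
          nlinarith
    _ ≤ Real.sqrt ε / 16 := hpow34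
    _ ≤ Real.sqrt ε / 4 := by
          have := Real.sqrt_nonneg ε
          linarith
  have hSzv : ∀ v : Fin n → ℝ, v ⬝ᵥ Sz *ᵥ v
      = (1 / 2) * ∑ i, (∑ k ∈ range (z + 1), (1 - dg i) ^ k)
          * ((star U *ᵥ (R *ᵥ v)) i) ^ 2 := by
    intro v
    rw [hSz, hsmudot]
    congr 1
    rw [qf, hTspec, dotd]
  have hLpv : ∀ v : Fin n → ℝ, v ⬝ᵥ Lp *ᵥ v
      = (1 / 2) * ∑ i, (dg i)⁻¹ * ((star U *ᵥ (R *ᵥ v)) i) ^ 2 := by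
    intro v
    rw [hLpX, hXdef, hsmudot]
    congr 1
    rw [qf, hMpdef, dotd]
  have hw0 : ∀ (v : Fin n → ℝ) (i : Fin n), dg i = 0 → (star U *ᵥ (R *ᵥ v)) i = 0 := by
    intro v i hi
    have hPu : P *ᵥ (R *ᵥ v) = R *ᵥ v := by rw [Matrix.mulVec_mulVec, hPR]
    have hm : star U * (U * diagonal dind * star U) = diagonal dind * star U := by
      calc star U * (U * diagonal dind * star U)
          = (star U * U) * (diagonal dind * star U) := by simp only [Matrix.mul_assoc]
      _ = diagonal dind * star U := by rw [hUsU, Matrix.one_mul]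
    have heq : (star U *ᵥ (R *ᵥ v)) = diagonal dind *ᵥ (star U *ᵥ (R *ᵥ v)) := by
      conv_lhs => rw [← hPu, ← hP'P]
      rw [Matrix.mulVec_mulVec, hm, ← Matrix.mulVec_mulVec]
    have hcomp := congrFun heq i
    rw [Matrix.mulVec_diagonal, hinddef] at hcomp
    simpa [hi] using hcomp
  constructor
  · intro v
    rw [hsmudot, hLpv v, hSzv v, mul_left_comm]
    refine mul_le_mul_of_nonneg_left ?_ (by norm_num : (0:ℝ) ≤ 1/2)
    rw [Finset.mul_sum]
    refine Finset.sum_le_sum fun i _ => ?_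
    by_cases hi : dg i = 0
    · rw [hw0 v i hi]
      simp
    · have hg := (hgb i hi).1
      have hwsq : (0:ℝ) ≤ ((star U *ᵥ (R *ᵥ v)) i) ^ 2 := sq_nonneg _
      calc (1 - Real.sqrt ε / 4) * ((dg i)⁻¹ * ((star U *ᵥ (R *ᵥ v)) i) ^ 2)
          = ((1 - Real.sqrt ε / 4) * (dg i)⁻¹) * ((star U *ᵥ (R *ᵥ v)) i) ^ 2 := by ring
      _ ≤ (∑ k ∈ range (z + 1), (1 - dg i) ^ k) * ((star U *ᵥ (R *ᵥ v)) i) ^ 2 :=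
            mul_le_mul_of_nonneg_right hg hwsq
  · intro v
    rw [hLpv v, hSzv v]
    refine mul_le_mul_of_nonneg_left ?_ (by norm_num : (0:ℝ) ≤ 1/2)
    refine Finset.sum_le_sum fun i _ => ?_
    by_cases hi : dg i = 0
    · rw [hw0 v i hi]
      simp
    · exact mul_le_mul_of_nonneg_right (hgb i hi).2 (sq_nonneg _)
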